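/- Let Γ₁ and Γ₂ be groups with (|Γ₁| − 1)(|Γ₂| − 1) ≥ 2, i.e. both groups are nontrivial and at least one of them has at least three elements. Then the free product Γ₁ ∗ Γ₂ is a Powers group. -/

import Mathlib

noncomputable section

open scoped ENNReal

/-- A group `Γ` has the Powers property if for every finite subset `F` of `Γ \\ {1}` and
every integer `N ≥ 1` there are a partition `Γ = C ⊔ D` and elements `γ₁, …, γ_N ∈ Γ` such
that `f·C ∩ C = ∅` for all `f ∈ F` and `γ_j·D ∩ γ_k·D = ∅` for all `j ≠ k`. -/
def IsPowersGroup (Γ : Type*) [Group Γ] : Prop :=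
  ∀ F : Finset Γ, (1 : Γ) ∉ F → ∀ N : ℕ, 1 ≤ N →
    ∃ (C D : Set Γ) (γ : Fin N → Γ),
      C ∪ D = Set.univ ∧ Disjoint C D ∧
      (∀ f ∈ F, Disjoint ((f * ·) '' C) C) ∧
      ∀ j k : Fin N, j ≠ k → Disjoint ((γ j * ·) '' D) ((γ k * ·) '' D)

set_option linter.unusedSectionVars false

namespace PowersAux


open Monoid Monoid.CoprodI

variable {ι : Type*} {M : ι → Type*} [∀ i, Group (M i)]
variable [DecidableEq ι] [∀ i, DecidableEq (M i)]

/-- The reduced word of an element. -/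
def wd (g : CoprodI M) : Word M := Word.equiv g

/-- Length of the reduced word. -/
def len (g : CoprodI M) : ℕ := (wd g).toList.length

/-- Index of the first letter. -/
def fstI (g : CoprodI M) : Option ι := ((wd g).toList.head?).map Sigma.fst

/-- Index of the last letter. -/
def lstI (g : CoprodI M) : Option ι := ((wd g).toList.getLast?).map Sigma.fst

theorem equiv_symm_eq (w : Word M) : Word.equiv.symm w = w.prod := rfl

theorem wd_prod (w : Word M) : wd w.prod = w := by
  rw [wd, ← equiv_symm_eq, Equiv.apply_symm_apply]

theorem prod_wd (g : CoprodI M) : (wd g).prod = g := by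
  rw [← equiv_symm_eq, wd, Equiv.symm_apply_apply]

theorem wd_one : wd (1 : CoprodI M) = Word.empty := by
  have := wd_prod (Word.empty : Word M); rwa [Word.prod_empty] at this

theorem wd_neword {a b : ι} (w : NeWord M a b) : wd w.prod = w.toWord := wd_prod w.toWord

theorem len_neword {a b : ι} (w : NeWord M a b) : len w.prod = w.toList.length := by
  rw [len, wd_neword]; rfl

theorem fstI_neword {a b : ι} (w : NeWord M a b) : fstI w.prod = some a := by
  rw [fstI, wd_neword]
  show (w.toList.head?).map Sigma.fst = some a
  rw [NeWord.toList_head?]; rfl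

theorem lstI_neword {a b : ι} (w : NeWord M a b) : lstI w.prod = some b := by
  rw [lstI, wd_neword]
  show (w.toList.getLast?).map Sigma.fst = some b
  rw [NeWord.toList_getLast?]; rfl

theorem fstI_one : fstI (1 : CoprodI M) = none := by rw [fstI, wd_one]; rfl

theorem lstI_one : lstI (1 : CoprodI M) = none := by rw [lstI, wd_one]; rfl

theorem len_one : len (1 : CoprodI M) = 0 := by rw [len, wd_one]; rfl

theorem ne_one_of_fstI {g : CoprodI M} {k : ι} (h : fstI g = some k) : g ≠ 1 := by
  rintro rfl; rw [fstI_one] at h; simp at h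

theorem ne_one_of_lstI {g : CoprodI M} {k : ι} (h : lstI g = some k) : g ≠ 1 := by
  rintro rfl; rw [lstI_one] at h; simp at h

theorem eq_one_of_len_eq_zero {g : CoprodI M} (h : len g = 0) : g = 1 := by
  rw [len, List.length_eq_zero_iff] at h
  have : wd g = Word.empty := Word.ext h
  rw [← prod_wd g, this, Word.prod_empty]

theorem neword_prod_ne_one {a b : ι} (w : NeWord M a b) : w.prod ≠ 1 := by
  intro h
  have h2 := wd_neword w
  rw [h, wd_one] at h2
  exact w.toList_ne_nil (by rw [show w.toList = w.toWord.toList from rfl, ← h2]; rfl)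

theorem exists_neword {g : CoprodI M} (h : g ≠ 1) :
    ∃ (a b : ι) (w : NeWord M a b), w.prod = g := by
  have h2 : wd g ≠ Word.empty := by
    intro he
    exact h (by rw [← prod_wd g, he, Word.prod_empty])
  obtain ⟨a, b, w, hw⟩ := NeWord.of_word (wd g) h2
  exact ⟨a, b, w, by rw [NeWord.prod, hw, prod_wd]⟩

theorem inv_toList_length {a b : ι} (w : NeWord M a b) :
    w.inv.toList.length = w.toList.length := by
  induction w with
  | singleton x h => rfl
  | append w₁ hne w₂ ih₁ ih₂ => simp [NeWord.inv, ih₁, ih₂, Nat.add_comm]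

theorem len_inv (g : CoprodI M) : len g⁻¹ = len g := by
  rcases eq_or_ne g 1 with rfl | hg
  · rw [inv_one]
  · obtain ⟨a, b, w, rfl⟩ := exists_neword hg
    rw [← NeWord.inv_prod, len_neword, len_neword, inv_toList_length]

theorem fstI_iff_lstI_inv {g : CoprodI M} {k : ι} : fstI g = some k ↔ lstI g⁻¹ = some k := by
  constructor
  · intro h
    obtain ⟨a, b, w, rfl⟩ := exists_neword (ne_one_of_fstI h)
    rw [fstI_neword] at h
    rw [← NeWord.inv_prod, lstI_neword]
    exact h
  · intro h
    obtain ⟨a, b, w, hw⟩ := exists_neword (ne_one_of_lstI h)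
    rw [← hw, lstI_neword] at h
    have : g = w.inv.prod := by rw [NeWord.inv_prod, hw, inv_inv]
    rw [this, fstI_neword]
    exact h
theorem getLast?_cons_ne {α : Type*} {l : List α} (h : l ≠ []) (a : α) :
    (a :: l).getLast? = l.getLast? := by
  cases l with
  | nil => exact absurd rfl h
  | cons b t => exact List.getLast?_cons_cons ..

-- the left-multiplication-by-a-letter lemma, word level
theorem smul_word_getLast {k : ι} (d : M k) (w : Word M) (hl : 2 ≤ w.toList.length) :
    (CoprodI.of d • w).toList.getLast? = w.toList.getLast? ∧
      w.toList.length ≤ (CoprodI.of d • w).toList.length + 1 := by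
  rcases eq_or_ne d 1 with rfl | hd
  · rw [show (CoprodI.of (1 : M k)) = 1 from map_one _, one_smul]
    exact ⟨rfl, by omega⟩
  by_cases hf : w.fstIdx = some k
  · -- first letter has index k
    rcases hlist : w.toList with _ | ⟨a, tl⟩
    · rw [Word.fstIdx, hlist] at hf; simp at hf
    obtain ⟨k', m⟩ := a
    have hk' : k' = k := by
      rw [Word.fstIdx, hlist] at hf
      simpa using hf
    subst hk'
    have htl_ne : tl ≠ [] := by
      rintro rfl
      rw [hlist] at hl; simp at hl
    have hchain := w.chain_ne
    rw [hlist] at hchain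
    have hm1 : m ≠ 1 := w.ne_one ⟨k', m⟩ (by rw [hlist]; exact List.mem_cons_self)
    set W' : Word M := ⟨tl, fun l hl' => w.ne_one l (by rw [hlist]; exact List.mem_cons_of_mem _ hl'),
      hchain.tail⟩ with hW'
    have h2 : W'.fstIdx ≠ some k' := by
      rw [Word.fstIdx_ne_iff]
      intro l hl'
      have hh : tl.head? = some l := hl'
      rcases tl with _ | ⟨b, tl'⟩
      · exact absurd rfl htl_ne
      · have hb : l = b := by simpa using hh.symm
        subst hb
        rw [List.isChain_cons_cons] at hchain
        exact hchain.1
    have hw : w = Word.cons m W' h2 hm1 := by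
      apply Word.ext
      rw [hlist]; rfl
    have hep : Word.equivPair k' w = ⟨m, W', h2⟩ := by
      apply (Word.equivPair k').apply_eq_iff_eq_symm_apply.mpr
      rw [Word.equivPair_symm, Word.rcons, dif_neg hm1, hw]
    have hsm : CoprodI.of d • w = Word.rcons ⟨d * m, W', h2⟩ := by
      rw [Word.of_smul_def, hep]
    have hWtl : W'.toList = tl := rfl
    by_cases hdm : d * m = 1
    · rw [hsm]
      simp only [Word.rcons, dif_pos hdm]
      refine ⟨(getLast?_cons_ne htl_ne _).symm, by simp [hWtl]⟩
    · rw [hsm]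
      simp only [Word.rcons, dif_neg hdm]
      refine ⟨?_, ?_⟩
      · show (⟨k', d * m⟩ :: tl : List _).getLast? = (⟨k', m⟩ :: tl : List _).getLast?
        rw [getLast?_cons_ne htl_ne, getLast?_cons_ne htl_ne]
      · show (⟨k', m⟩ :: tl : List _).length ≤ (⟨k', d * m⟩ :: tl : List _).length + 1
        simp
  · have hep := Word.equivPair_eq_of_fstIdx_ne hf
    have hsm : CoprodI.of d • w = Word.rcons ⟨d * 1, w, hf⟩ := by
      rw [Word.of_smul_def, hep]
    rw [mul_one] at hsm
    have hwne : w.toList ≠ [] := by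
      intro h; rw [h] at hl; simp at hl
    rw [hsm]
    simp only [Word.rcons, dif_neg hd]
    refine ⟨?_, ?_⟩
    · show (⟨k, d⟩ :: w.toList : List _).getLast? = w.toList.getLast?
      rw [getLast?_cons_ne hwne]
    · show w.toList.length ≤ (⟨k, d⟩ :: w.toList : List _).length + 1
      simp only [List.length_cons]; omega

theorem wd_of_mul {k : ι} (d : M k) (h : CoprodI M) :
    wd (CoprodI.of d * h) = CoprodI.of d • wd h := by
  have h1 : wd (CoprodI.of d * h) = (CoprodI.of d * h) • Word.empty := rfl
  have h2 : wd h = h • Word.empty := rfl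
  rw [h1, h2, mul_smul]

/-- Left multiplication by a single letter: last letter is preserved, length drops by ≤ 1. -/
theorem mul_letter_lstI {k : ι} (d : M k) (h : CoprodI M) (hl : 2 ≤ len h) :
    lstI (CoprodI.of d * h) = lstI h ∧ len h ≤ len (CoprodI.of d * h) + 1 := by
  obtain ⟨h1, h2⟩ := smul_word_getLast d (wd h) hl
  constructor
  · simp only [lstI, wd_of_mul, h1]
  · simp only [len, wd_of_mul]; exact h2

/-- Right multiplication by a single letter: first letter is preserved, length drops by ≤ 1. -/
theorem letter_mul_fstI (q : CoprodI M) {jj : ι} (hq : fstI q = some jj) (hl : 2 ≤ len q)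
    {k : ι} (d : M k) : fstI (q * CoprodI.of d) = some jj ∧ len q ≤ len (q * CoprodI.of d) + 1 := by
  have h1 : lstI q⁻¹ = some jj := fstI_iff_lstI_inv.1 hq
  have hlen : 2 ≤ len q⁻¹ := by rw [len_inv]; exact hl
  obtain ⟨h2, h3⟩ := mul_letter_lstI d⁻¹ q⁻¹ hlen
  have he : CoprodI.of d⁻¹ * q⁻¹ = (q * CoprodI.of d)⁻¹ := by
    rw [mul_inv_rev, map_inv]
  rw [he] at h2 h3
  constructor
  · exact fstI_iff_lstI_inv.2 (h2.trans h1)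
  · rw [len_inv, len_inv] at h3; omega

/-- Splitting off the last letter of a non-trivial element. -/
theorem decomp_right {g : CoprodI M} (hg : g ≠ 1) :
    ∃ (v : CoprodI M) (k : ι) (d : M k), g = v * CoprodI.of d ∧ len v + 1 = len g := by
  have hne : (wd g).toList ≠ [] := by
    intro h
    exact hg (eq_one_of_len_eq_zero (by rw [len, h]; rfl))
  obtain ⟨l', a, hsplit⟩ : ∃ l' a, (wd g).toList = l' ++ [a] := by
    rcases List.eq_nil_or_concat (wd g).toList with h | ⟨l', a, h⟩
    · exact absurd h hne
    · exact ⟨l', a, by simpa [List.concat_eq_append] using h⟩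
  have hmem : ∀ x ∈ l', x ∈ (wd g).toList := by
    intro x hx; rw [hsplit]; exact List.mem_append_left _ hx
  set W' : Word M := ⟨l', fun x hx => (wd g).ne_one x (hmem x hx),
    (wd g).chain_ne.prefix ⟨[a], hsplit.symm⟩⟩ with hW'
  have h0 : g = Word.prod (wd g) := (prod_wd g).symm
  rw [Word.prod, hsplit, List.map_append, List.prod_append] at h0
  refine ⟨W'.prod, a.1, a.2, ?_, ?_⟩
  · rw [h0]
    congr 1
  · have hW : len W'.prod = l'.length := by rw [len, wd_prod]
    have hG : len g = l'.length + 1 := by rw [len, hsplit]; simp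
    omega

/-- Key cancellation bound: multiplying on the right by a much shorter element
preserves the first letter. -/
theorem keyD {jj : ι} : ∀ (n : ℕ) (v p : CoprodI M), len v ≤ n → fstI p = some jj →
    len v + 2 ≤ len p → fstI (p * v) = some jj ∧ len p ≤ len (p * v) + len v := by
  intro n
  induction n with
  | zero =>
    intro v p h0 hp _
    have : v = 1 := eq_one_of_len_eq_zero (by omega)
    subst this
    rw [mul_one]
    exact ⟨hp, by omega⟩
  | succ n ih =>
    intro v p hn hp hlp
    rcases eq_or_ne v 1 with rfl | hv
    · rw [mul_one]; rw [len_one] at hlp ⊢; exact ⟨hp, by omega⟩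
    obtain ⟨v', k, d, hveq, hlen⟩ := decomp_right hv
    subst hveq
    have hv'n : len v' ≤ n := by omega
    obtain ⟨h1, h2⟩ := ih v' p hv'n hp (by omega)
    have hq2 : 2 ≤ len (p * v') := by omega
    obtain ⟨h3, h4⟩ := letter_mul_fstI (p * v') h1 hq2 d
    rw [← mul_assoc]
    exact ⟨h3, by omega⟩


theorem two_le_length_of_ne {a b : ι} (w : NeWord M a b) (hab : a ≠ b) :
    2 ≤ w.toList.length := by
  by_contra h
  push_neg at h
  have h1 := w.toList_ne_nil
  interval_cases hl : w.toList.length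
  · exact h1 (List.length_eq_zero_iff.1 hl)
  · obtain ⟨e, he⟩ := List.length_eq_one_iff.1 hl
    have hh := w.toList_head?
    have hg := w.toList_getLast?
    rw [he] at hh hg
    simp only [List.head?_cons, List.getLast?_singleton, Option.some.injEq] at hh hg
    rw [hh] at hg
    exact hab (congrArg Sigma.fst hg)

/-- Prepending a reduced word to an element whose first letter does not clash. -/
theorem prepend_fstI {s t : ι} (w : NeWord M s t) (u : CoprodI M)
    (hu : fstI u ≠ some t) : fstI (w.prod * u) = some s := by
  rcases eq_or_ne u 1 with rfl | hu1
  · rw [mul_one, fstI_neword]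
  · obtain ⟨a, b, v, rfl⟩ := exists_neword hu1
    have ha : t ≠ a := by
      intro h
      exact hu (by rw [fstI_neword, h])
    rw [← NeWord.append_prod (hne := ha) (w₁ := w) (w₂ := v), fstI_neword]

section Letters

variable (i j : ι) (hij : i ≠ j) (x : M i) (hx : x ≠ 1)
  (y y' : M j) (hy : y ≠ 1) (hy' : y' ≠ 1) (hyy' : y ≠ y')

/-- word for `(y'x)^r · (y'y⁻¹)`  -/
def gword : ℕ → NeWord M j j
  | 0 => NeWord.singleton (y' * y⁻¹) (by simp [mul_inv_eq_one]; exact fun h => hyy' h.symm)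
  | r + 1 => NeWord.append (NeWord.singleton y' hy') hij.symm
      (NeWord.append (NeWord.singleton x hx) hij (gword r))

/-- word for `c^(r+1)` where `c = y x y' y⁻¹` -/
def cword (r : ℕ) : NeWord M j j :=
  NeWord.append (NeWord.singleton y hy) hij.symm
    (NeWord.append (NeWord.singleton x hx) hij (gword i j hij x hx y y' hy' hyy' r))

theorem gword_prod (r : ℕ) : (gword i j hij x hx y y' hy' hyy' r).prod =
    CoprodI.of y' * (CoprodI.of x * CoprodI.of y')^r * (CoprodI.of y)⁻¹ := by
  induction r with
  | zero =>
    simp [gword, map_mul, map_inv]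
  | succ r ih =>
    show (NeWord.append _ _ _).prod = _
    rw [NeWord.append_prod, NeWord.append_prod, NeWord.prod_singleton, NeWord.prod_singleton, ih,
      pow_succ']
    simp [mul_assoc]

theorem cword_prod (r : ℕ) : (cword i j hij x hx y y' hy hy' hyy' r).prod =
    CoprodI.of y * (CoprodI.of x * CoprodI.of y')^(r+1) * (CoprodI.of y)⁻¹ := by
  rw [cword, NeWord.append_prod, NeWord.append_prod, NeWord.prod_singleton,
    NeWord.prod_singleton, gword_prod, pow_succ']
  simp [mul_assoc]

theorem gword_length (r : ℕ) :
    (gword i j hij x hx y y' hy' hyy' r).toList.length = 2*r + 1 := by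
  induction r with
  | zero => rfl
  | succ r ih =>
    show (NeWord.append _ _ _).toList.length = _
    simp only [NeWord.toList, List.length_append] at ih ⊢
    simp only [List.length_singleton] at ih ⊢
    omega

theorem cword_length (r : ℕ) :
    (cword i j hij x hx y y' hy hy' hyy' r).toList.length = 2*r + 3 := by
  rw [cword]
  simp only [NeWord.toList, List.length_append, List.length_singleton]
  rw [gword_length]
  omega

/-- word for `x (yx)^r y'` -/
def dword : ℕ → NeWord M i j
  | 0 => NeWord.append (NeWord.singleton x hx) hij (NeWord.singleton y' hy')
  | r + 1 => NeWord.append (NeWord.singleton x hx) hij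
      (NeWord.append (NeWord.singleton y hy) hij.symm (dword r))

theorem dword_prod (r : ℕ) : (dword i j hij x hx y y' hy hy' r).prod =
    CoprodI.of x * (CoprodI.of y * CoprodI.of x)^r * CoprodI.of y' := by
  induction r with
  | zero => simp [dword]
  | succ r ih =>
    show (NeWord.append _ _ _).prod = _
    rw [NeWord.append_prod, NeWord.append_prod, NeWord.prod_singleton, NeWord.prod_singleton,
      ih, pow_succ']
    simp [mul_assoc]

/-- word for `x⁻¹ y'⁻¹ (yx)^(r+1) y' x` -/
def hword (r : ℕ) : NeWord M i i :=
  NeWord.append (NeWord.singleton x⁻¹ (inv_ne_one.2 hx)) hij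
    (NeWord.append (NeWord.singleton (y'⁻¹ * y) (by
        rw [Ne, inv_mul_eq_one]; exact fun h => hyy' h.symm)) hij.symm
      (NeWord.append (dword i j hij x hx y y' hy hy' r) hij.symm (NeWord.singleton x hx)))

theorem hword_prod (r : ℕ) : (hword i j hij x hx y y' hy hy' hyy' r).prod =
    (CoprodI.of x)⁻¹ * (CoprodI.of y')⁻¹ * (CoprodI.of y * CoprodI.of x)^(r+1) *
      (CoprodI.of y' * CoprodI.of x) := by
  rw [hword]
  simp only [NeWord.append_prod, NeWord.prod_singleton]
  rw [dword_prod, pow_succ']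
  simp [map_mul, map_inv, mul_assoc]

include i j hij x hx y y' hy hy' hyy' in
theorem delta_quot {a b : ℕ} (hab : b < a) :
    ∃ w : NeWord M i i, w.prod =
      (CoprodI.of x * (CoprodI.of y * CoprodI.of x)^(b+1) * (CoprodI.of y' * CoprodI.of x))⁻¹ *
      (CoprodI.of x * (CoprodI.of y * CoprodI.of x)^(a+1) * (CoprodI.of y' * CoprodI.of x)) := by
  refine ⟨hword i j hij x hx y y' hy hy' hyy' (a - b - 1), ?_⟩
  rw [hword_prod]
  have h1 : a - b - 1 + 1 = a - b := by omega
  rw [h1]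
  have h2 : a + 1 = (b + 1) + (a - b) := by omega
  rw [h2, pow_add]
  group

include i j hij x hx y y' hy hy' hyy' in
theorem conj_exists (F₀ : Finset (CoprodI M)) (h1F : (1 : CoprodI M) ∉ F₀) :
    ∃ g : CoprodI M, ∀ f ∈ F₀, fstI (g * f * g⁻¹) = some j := by
  set gk : ℕ → CoprodI M := fun k => CoprodI.of y * (CoprodI.of x * CoprodI.of y')^k with hgk
  set C : CoprodI M := CoprodI.of y * (CoprodI.of x * CoprodI.of y') * (CoprodI.of y)⁻¹ with hC
  have key : ∀ f ∈ F₀, ∀ k l : ℕ, k < l →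
      fstI (gk k * f * (gk k)⁻¹) ≠ some j → fstI (gk l * f * (gk l)⁻¹) = some j := by
    intro f hf k l hkl hbad
    have hf1 : f ≠ 1 := fun h => h1F (h ▸ hf)
    set f' := gk k * f * (gk k)⁻¹ with hf'
    have hf'1 : f' ≠ 1 := by
      intro h
      apply hf1
      have hfeq : f = (gk k)⁻¹ * f' * gk k := by rw [hf']; group
      rw [hfeq, h]; group
    set m := l - k with hm
    set r := m - 1 with hr
    have hrm : r + 1 = m := by omega
    have hCm : C ^ m = CoprodI.of y * (CoprodI.of x * CoprodI.of y')^m * (CoprodI.of y)⁻¹ :=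
      conj_pow
    have hcw : (cword i j hij x hx y y' hy hy' hyy' r).prod = C ^ m := by
      rw [cword_prod, hrm, hCm]
    have hgl : C ^ m * gk k = gk l := by
      rw [hCm, hgk]
      simp only [mul_assoc, inv_mul_cancel_left]
      rw [← pow_add]
      have : m + k = l := by omega
      rw [this]
    have htgt : gk l * f * (gk l)⁻¹ = C^m * f' * (C^m)⁻¹ := by
      rw [← hgl, hf']; group
    obtain ⟨a, b, w, hw⟩ := exists_neword hf'1
    have ha : a ≠ j := by
      intro h; subst a
      exact hbad (by rw [← hw, fstI_neword])
    by_cases hbj : b = j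
    · subst b
      set p := NeWord.append (cword i j hij x hx y y' hy hy' hyy' r) (Ne.symm ha) w with hp
      have hpprod : p.prod = C^m * f' := by rw [hp, NeWord.append_prod, hcw, hw]
      have hfstp : fstI p.prod = some j := fstI_neword p
      have hlenp : len p.prod = (2*r+3) + w.toList.length := by
        rw [len_neword, hp]
        show (_ ++ _ : List _).length = _
        rw [List.length_append, cword_length]
      have hw2 : 2 ≤ w.toList.length := two_le_length_of_ne w ha
      have hlenC : len ((C^m)⁻¹) = 2*r + 3 := by
        rw [len_inv, ← hcw, len_neword, cword_length]
      obtain ⟨hres, -⟩ := keyD (len ((C^m)⁻¹)) ((C^m)⁻¹) p.prod le_rfl hfstp (by omega)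
      rw [htgt, ← hpprod]
      exact hres
    · have hq : (NeWord.append
          (NeWord.append (cword i j hij x hx y y' hy hy' hyy' r) (Ne.symm ha) w) hbj
          ((cword i j hij x hx y y' hy hy' hyy' r).inv)).prod = C^m * f' * (C^m)⁻¹ := by
        simp only [NeWord.append_prod, NeWord.inv_prod, hcw, hw]
      rw [htgt, ← hq, fstI_neword]
  by_contra hcon
  push_neg at hcon
  choose ff hmem hbad using hcon
  obtain ⟨k, hk, l, hl, hkl, hfe⟩ := Finset.exists_ne_map_eq_of_card_lt_of_maps_to
    (s := Finset.range (F₀.card + 1)) (t := F₀) (by simp)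
    (fun k _ => hmem (gk k))
  rcases hkl.lt_or_gt with h | h
  · have hgood := key (ff (gk k)) (hmem (gk k)) k l h (hbad (gk k))
    rw [hfe] at hgood
    exact hbad (gk l) hgood
  · have hgood := key (ff (gk l)) (hmem (gk l)) l k h (hbad (gk l))
    rw [← hfe] at hgood
    exact hbad (gk k) hgood

end Letters


end PowersAux

namespace PowersAux

open Monoid Monoid.CoprodI

variable {ι : Type*} {M : ι → Type*} [∀ i, Group (M i)]
variable [DecidableEq ι] [∀ i, DecidableEq (M i)]

theorem main (i j : ι) (hij : i ≠ j) (x : M i) (hx : x ≠ 1) (y y' : M j)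
    (hy : y ≠ 1) (hy' : y' ≠ 1) (hyy' : y ≠ y') : IsPowersGroup (CoprodI M) := by
  intro F hF N hN
  set F' : Finset (CoprodI M) := F ∪ F.image (fun f => f⁻¹) with hF'
  have h1F' : (1 : CoprodI M) ∉ F' := by
    simp only [hF', Finset.mem_union, Finset.mem_image, not_or]
    refine ⟨hF, ?_⟩
    rintro ⟨f, hf, hf1⟩
    exact hF (inv_eq_one.1 hf1 ▸ hf)
  obtain ⟨g, hg⟩ := conj_exists i j hij x hx y y' hy hy' hyy' F' h1F'
  have hgood : ∀ f ∈ F, ∃ w : NeWord M j j, w.prod = g * f * g⁻¹ := by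
    intro f hf
    have hmem1 : f ∈ F' := Finset.mem_union_left _ hf
    have hmem2 : f⁻¹ ∈ F' := Finset.mem_union_right _ (Finset.mem_image_of_mem _ hf)
    have h1 := hg f hmem1
    have h2 := hg f⁻¹ hmem2
    have hne : g * f * g⁻¹ ≠ 1 := ne_one_of_fstI h1
    obtain ⟨a, b, w, hw⟩ := exists_neword hne
    have haj : a = j := by
      have h3 := fstI_neword w
      rw [hw, h1] at h3
      exact (Option.some.inj h3).symm
    have hbj : b = j := by
      have hinv : (g * f * g⁻¹)⁻¹ = g * f⁻¹ * g⁻¹ := by group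
      have h3 := fstI_neword w.inv
      rw [NeWord.inv_prod, hw, hinv, h2] at h3
      exact (Option.some.inj h3).symm
    subst a; subst b
    exact ⟨w, hw⟩
  choose wgf hwgf using hgood
  set δ : ℕ → CoprodI M := fun a =>
    CoprodI.of x * (CoprodI.of y * CoprodI.of x)^(a+1) * (CoprodI.of y' * CoprodI.of x) with hδ
  have hδq : ∀ a b : ℕ, a ≠ b → ∃ w : NeWord M i i, w.prod = (δ a)⁻¹ * δ b := by
    intro a b hab
    rcases hab.lt_or_gt with h | h
    · obtain ⟨w, hw⟩ := delta_quot i j hij x hx y y' hy hy' hyy' h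
      exact ⟨w, hw⟩
    · obtain ⟨w, hw⟩ := delta_quot i j hij x hx y y' hy hy' hyy' h
      refine ⟨w.inv, ?_⟩
      rw [NeWord.inv_prod, hw]
      simp only [hδ]
      group
  refine ⟨{u | fstI (g * u) = some i}, {u | fstI (g * u) = some i}ᶜ,
    fun k => g⁻¹ * δ k.val * g, Set.union_compl_self _, disjoint_compl_right, ?_, ?_⟩
  · intro f hf
    rw [Set.disjoint_left]
    rintro u ⟨c, hc, rfl⟩ hcu
    have hc' : fstI (g * c) = some i := hc
    have hcu' : fstI (g * (f * c)) = some i := hcu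
    have he : g * (f * c) = (wgf f hf).prod * (g * c) := by rw [hwgf]; group
    have hj2 : fstI (g * (f * c)) = some j := by
      rw [he]
      refine prepend_fstI _ _ ?_
      rw [hc']
      exact fun hcon => hij (Option.some.inj hcon)
    rw [hj2] at hcu'
    exact hij (Option.some.inj hcu').symm
  · intro k l hkl
    rw [Set.disjoint_left]
    rintro u ⟨d, hd, rfl⟩ ⟨d', hd', he⟩
    have hd1 : ¬ fstI (g * d) = some i := hd
    have hd1' : ¬ fstI (g * d') = some i := hd'
    obtain ⟨w, hw⟩ := hδq l.val k.val (fun h => hkl (Fin.val_injective h).symm)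
    have he2 : δ l.val * (g * d') = δ k.val * (g * d) := by
      have h5 := congrArg (fun z => g * z) he
      simpa [mul_assoc] using h5
    have hkey : w.prod * (g * d) = g * d' := by
      rw [hw, mul_assoc, ← he2, ← mul_assoc, ← mul_assoc, inv_mul_cancel, one_mul]
    apply hd1'
    rw [← hkey]
    exact prepend_fstI w (g * d) hd1

end PowersAux

section Transfer

theorem isPowersGroup_of_mulEquiv {G H : Type*} [Group G] [Group H] (e : G ≃* H)
    (h : IsPowersGroup G) : IsPowersGroup H := by
  classical
  intro F hF N hN
  have h1 : (1 : G) ∉ F.image (fun f => e.symm f) := by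
    rw [Finset.mem_image]
    rintro ⟨f, hf, hf1⟩
    apply hF
    have hfe : f = 1 := by
      have h2 := congrArg e hf1
      simpa using h2
    exact hfe ▸ hf
  obtain ⟨C, D, γ, hu, hd, hc, hγ⟩ := h _ h1 N hN
  have himg : ∀ (h' : H) (S : Set G), (h' * ·) '' (e '' S) = e '' ((e.symm h' * ·) '' S) := by
    intro h' S
    rw [Set.image_image, Set.image_image]
    apply Set.image_congr'
    intro c
    simp [map_mul]
  refine ⟨e '' C, e '' D, fun k => e (γ k), ?_, ?_, ?_, ?_⟩
  · rw [← Set.image_union, hu, Set.image_univ]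
    exact e.surjective.range_eq
  · exact (Set.disjoint_image_iff e.injective).2 hd
  · intro f hf
    rw [himg]
    exact (Set.disjoint_image_iff e.injective).2 (hc (e.symm f) (Finset.mem_image_of_mem _ hf))
  · intro k l hkl
    rw [himg, himg]
    refine (Set.disjoint_image_iff e.injective).2 ?_
    have hsymm : ∀ k', e.symm (e (γ k')) = γ k' := fun k' => e.symm_apply_apply _
    rw [hsymm, hsymm]
    exact hγ k l hkl

universe u v

/-- The two-factor family. -/
def fam (G₁ : Type u) (G₂ : Type v) : Bool → Type (max u v)
  | true => ULift G₁
  | false => ULift G₂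

variable {G₁ : Type u} {G₂ : Type v} [Group G₁] [Group G₂]

instance famGroup : ∀ b, Group (fam G₁ G₂ b)
  | true => inferInstanceAs (Group (ULift G₁))
  | false => inferInstanceAs (Group (ULift G₂))

open Monoid in
def toCoprod : CoprodI (fam G₁ G₂) →* Monoid.Coprod G₁ G₂ :=
  CoprodI.lift (fun b => match b with
    | true => (Coprod.inl : G₁ →* Monoid.Coprod G₁ G₂).comp MulEquiv.ulift.toMonoidHom
    | false => (Coprod.inr : G₂ →* Monoid.Coprod G₁ G₂).comp MulEquiv.ulift.toMonoidHom)

open Monoid in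
def ofCoprod : Monoid.Coprod G₁ G₂ →* CoprodI (fam G₁ G₂) :=
  Coprod.lift
    ((CoprodI.of : fam G₁ G₂ true →* _).comp (MulEquiv.ulift.symm.toMonoidHom))
    ((CoprodI.of : fam G₁ G₂ false →* _).comp (MulEquiv.ulift.symm.toMonoidHom))

open Monoid in
def coprodIEquiv : Monoid.CoprodI (fam G₁ G₂) ≃* Monoid.Coprod G₁ G₂ :=
  MonoidHom.toMulEquiv toCoprod ofCoprod
    (by
      apply CoprodI.ext_hom
      intro b
      cases b <;> ext m <;>
        (simp [toCoprod, ofCoprod, CoprodI.lift_of, Coprod.lift_apply_inl, Coprod.lift_apply_inr,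
          MulEquiv.apply_symm_apply, MulEquiv.symm_apply_apply]; try rfl))
    (by
      apply Coprod.hom_ext <;> ext m <;>
        (simp [toCoprod, ofCoprod, CoprodI.lift_of, Coprod.lift_apply_inl, Coprod.lift_apply_inr,
          MulEquiv.apply_symm_apply, MulEquiv.symm_apply_apply]; try rfl))

theorem pick_two {G : Type*} [Group G] (h : ∃ a b c : G, a ≠ b ∧ a ≠ c ∧ b ≠ c) :
    ∃ u₀ v₀ : G, u₀ ≠ 1 ∧ v₀ ≠ 1 ∧ u₀ ≠ v₀ := by
  obtain ⟨a, b, c, hab, hac, hbc⟩ := h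
  by_cases ha : a = 1
  · subst ha
    exact ⟨b, c, Ne.symm hab, Ne.symm hac, hbc⟩
  by_cases hb : b = 1
  · subst hb
    exact ⟨a, c, ha, Ne.symm hbc, hac⟩
  · exact ⟨a, b, ha, hb, hab⟩

theorem up_ne_one {G : Type*} [Group G] {g : G} (hg : g ≠ 1) : (ULift.up g : ULift G) ≠ 1 := by
  intro h
  exact hg (congrArg ULift.down h)

end Transfer

theorem isPowersGroup_coprod' {Γ₁ : Type u} {Γ₂ : Type v} [Group Γ₁] [Group Γ₂]
    [Nontrivial Γ₁] [Nontrivial Γ₂]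
    (hbig : (∃ a b c : Γ₁, a ≠ b ∧ a ≠ c ∧ b ≠ c) ∨ ∃ a b c : Γ₂, a ≠ b ∧ a ≠ c ∧ b ≠ c) :
    IsPowersGroup (Monoid.Coprod Γ₁ Γ₂) := by
  classical
  apply isPowersGroup_of_mulEquiv (coprodIEquiv (G₁ := Γ₁) (G₂ := Γ₂))
  rcases hbig with hb | hb
  · obtain ⟨u, v, hu, hv, huv⟩ := pick_two hb
    obtain ⟨x₀, hx₀⟩ := exists_ne (1 : Γ₂)
    exact PowersAux.main (M := fam Γ₁ Γ₂) false true (by simp) (ULift.up x₀) (up_ne_one hx₀)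
      (ULift.up u) (ULift.up v) (up_ne_one hu) (up_ne_one hv)
      (fun h => huv (congrArg ULift.down h))
  · obtain ⟨u, v, hu, hv, huv⟩ := pick_two hb
    obtain ⟨x₀, hx₀⟩ := exists_ne (1 : Γ₁)
    exact PowersAux.main (M := fam Γ₁ Γ₂) true false (by simp) (ULift.up x₀) (up_ne_one hx₀)
      (ULift.up u) (ULift.up v) (up_ne_one hu) (up_ne_one hv)
      (fun h => huv (congrArg ULift.down h))


/-- A free product `Γ₁ ∗ Γ₂` with `(|Γ₁| − 1)(|Γ₂| − 1) ≥ 2`, i.e. with both factors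
nontrivial and at least one of them of cardinality at least three, is a Powers group. -/
theorem isPowersGroup_coprod {Γ₁ Γ₂ : Type*} [Group Γ₁] [Group Γ₂]
    [Nontrivial Γ₁] [Nontrivial Γ₂]
    (hbig : (∃ a b c : Γ₁, a ≠ b ∧ a ≠ c ∧ b ≠ c) ∨ ∃ a b c : Γ₂, a ≠ b ∧ a ≠ c ∧ b ≠ c) :
    IsPowersGroup (Monoid.Coprod Γ₁ Γ₂) := by
  exact isPowersGroup_coprod' hbig
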